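/- Let h be a bilinear form on an n-dimensional real inner product space (V,g), and set t_{n−1}(h) := (1/(n−1)!)·*(h^{n−1}). Then in any orthonormal basis (e_i), t_{n−1}(h)(e_i,e_j) = (−1)^{i+j} times the determinant of the (n−1)×(n−1) matrix obtained from the matrix (h(e_a,e_b)) by deleting the i-th row and the j-th column; that is, the matrix of t_{n−1}(h) is the cofactor matrix (the transpose of the adjugate) of the matrix of h. -/
import Mathlib


noncomputable section

open Finset

/-- Double forms over an `n`-dimensional real inner product space, described by their
coefficients in a fixed orthonormal basis: a `(p,q)`-double form corresponds to a function
supported on pairs of subsets of cardinalities `p` and `q`. -/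
abbrev DForm (n : ℕ) := Finset (Fin n) → Finset (Fin n) → ℝ

namespace DForm

variable {n : ℕ}

/-- Sign of the shuffle placing the elements of `A` (in increasing order) before
those of `B` (in increasing order). -/
def shuffleSign (A B : Finset (Fin n)) : ℝ :=
  (-1 : ℝ) ^ (∑ x ∈ B, (A.filter fun a => x < a).card)

/-- The exterior product of double forms. -/
def wedge (ω₁ ω₂ : DForm n) : DForm n := fun I J =>
  ∑ A ∈ I.powerset, ∑ B ∈ J.powerset,
    shuffleSign A (I \ A) * shuffleSign B (J \ B) * ω₁ A B * ω₂ (I \ A) (J \ B)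

/-- Exterior powers `ω^k` of a double form. -/
def dpow (ω : DForm n) : ℕ → DForm n
  | 0 => fun I J => if I = ∅ ∧ J = ∅ then 1 else 0
  | k + 1 => wedge ω (dpow ω k)

/-- The double Hodge star operator. -/
def hstar (ω : DForm n) : DForm n := fun I J =>
  shuffleSign Iᶜ I * shuffleSign Jᶜ J * ω Iᶜ Jᶜ

/-- The contraction `c` of double forms. -/
def contr (ω : DForm n) : DForm n := fun I J =>
  ∑ j : Fin n,
    if j ∈ I ∨ j ∈ J then 0
    else shuffleSign {j} I * shuffleSign {j} J * ω (insert j I) (insert j J)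

/-- Iterated contraction `c^k`. -/
def citer (ω : DForm n) : ℕ → DForm n
  | 0 => ω
  | k + 1 => contr (citer ω k)

/-- The inner product of double forms. -/
def dinner (ω₁ ω₂ : DForm n) : ℝ :=
  ∑ I : Finset (Fin n), ∑ J : Finset (Fin n), ω₁ I J * ω₂ I J

/-- The transpose `ω^t` of a double form. -/
def transp (ω : DForm n) : DForm n := fun I J => ω J I

/-- The composition (Greub) product `ω₁ ∘ ω₂` of double forms. -/
def comp (ω₁ ω₂ : DForm n) : DForm n := fun I J =>
  ∑ K : Finset (Fin n), ω₂ I K * ω₁ K J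

/-- The scalar value of a `(0,0)`-double form. -/
def toScalar (ω : DForm n) : ℝ := ω ∅ ∅

/-- The metric, as a `(1,1)`-double form. -/
def gMetric (n : ℕ) : DForm n := fun I J => if I = J ∧ I.card = 1 then 1 else 0

/-- Iterated composition power `ω^{∘r}` of a `(1,1)`-double form, with `ω^{∘0} = g`. -/
def cpow (ω : DForm n) : ℕ → DForm n
  | 0 => gMetric n
  | r + 1 => comp ω (cpow ω r)

/-- The `(1,1)`-double form associated to a bilinear form, given by its matrix in the
orthonormal basis. -/
def ofMatrix (h : Matrix (Fin n) (Fin n) ℝ) : DForm n := fun I J =>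
  ∑ i : Fin n, ∑ j : Fin n, if I = {i} ∧ J = {j} then h i j else 0

/-- `ω` is a `(p,q)`-double form. -/
def IsOfDeg (ω : DForm n) (p q : ℕ) : Prop :=
  ∀ I J : Finset (Fin n), ω I J ≠ 0 → I.card = p ∧ J.card = q

/-- `ω` is a symmetric double form. -/
def IsSym (ω : DForm n) : Prop := ∀ I J, ω I J = ω J I

/-- The sign relating `e_{v 0} ∧ ⋯ ∧ e_{v (p-1)}` to the corresponding increasing
basis `p`-vector (and `0` if the indices are not pairwise distinct). -/
def tupleSign {p : ℕ} (v : Fin p → Fin n) : ℝ :=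
  if Function.Injective v then (((Equiv.Perm.sign (Tuple.sort v)) : ℤ) : ℝ) else 0

/-- Evaluation of a double form on wedges of basis vectors indexed by arbitrary tuples. -/
def evalT (ω : DForm n) {p q : ℕ} (v : Fin p → Fin n) (w : Fin q → Fin n) : ℝ :=
  tupleSign v * tupleSign w * ω (Finset.image v Finset.univ) (Finset.image w Finset.univ)

/-- The first Bianchi identity for a `(2,2)`-double form:
`R(x∧y,z∧t) + R(y∧z,x∧t) + R(z∧x,y∧t) = 0`. -/
def Bianchi2 (R : DForm n) : Prop :=
  ∀ x y z t : Fin n,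
    evalT R ![x, y] ![z, t] + evalT R ![y, z] ![x, t] + evalT R ![z, x] ![y, t] = 0

/-- The first Bianchi identity for a `(p,p)`-double form. -/
def FirstBianchi (ω : DForm n) (p : ℕ) : Prop :=
  ∀ (x : Fin (p + 1) → Fin n) (y : Fin (p - 1) → Fin n),
    ∑ j : Fin (p + 1),
      (-1 : ℝ) ^ (j : ℕ) * evalT ω (x ∘ Fin.succAbove j) (Fin.cons (x j) y) = 0

/-- The characteristic coefficient `s_k(h)` of a bilinear form `h`, defined through the
characteristic polynomial: `det(h - λ g) = ∑ (-1)^(n-i) s_i(h) λ^(n-i)`. -/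
def sInv (h : Matrix (Fin n) (Fin n) ℝ) (k : ℕ) : ℝ :=
  (-1 : ℝ) ^ k * (Matrix.charpoly h).coeff (n - k)

/-- The `k`-th cofactor (Newton) transformation `t_k(h) = (1/(k!(n-1-k)!)) *(g^{n-1-k} h^k)`. -/
def tInv (h : Matrix (Fin n) (Fin n) ℝ) (k : ℕ) : DForm n :=
  ((k.factorial * (n - 1 - k).factorial : ℕ) : ℝ)⁻¹ •
    hstar (wedge (dpow (gMetric n) (n - 1 - k)) (dpow (ofMatrix h) k))

/-- The `(r,q)`-cofactor `s_{(r,q)}(h) = (1/(q!(n-q-r)!)) *(g^{n-q-r} h^q)`. -/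
def sCof (h : Matrix (Fin n) (Fin n) ℝ) (r q : ℕ) : DForm n :=
  ((q.factorial * (n - q - r).factorial : ℕ) : ℝ)⁻¹ •
    hstar (wedge (dpow (gMetric n) (n - q - r)) (dpow (ofMatrix h) q))

end DForm
namespace DForm

variable {n : ℕ}

/-- Determinant of the submatrix of `h` with rows `I` and columns `J` (in increasing order);
zero if cardinalities mismatch. -/
def dsub (h : Matrix (Fin n) (Fin n) ℝ) (k : ℕ) (I J : Finset (Fin n)) : ℝ :=
  if hc : I.card = k ∧ J.card = k then
    Matrix.det (Matrix.of fun a b : Fin k =>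
      h (I.orderEmbOfFin hc.1 a) (J.orderEmbOfFin hc.2 b))
  else 0

lemma dpow_zero_apply (ω : DForm n) (I J : Finset (Fin n)) :
    dpow ω 0 I J = if I = ∅ ∧ J = ∅ then 1 else 0 := rfl

lemma shuffleSign_empty_left (B : Finset (Fin n)) : shuffleSign (∅ : Finset (Fin n)) B = 1 := by
  simp [shuffleSign]

lemma shuffleSign_singleton (i : Fin n) (B : Finset (Fin n)) :
    shuffleSign {i} B = (-1 : ℝ) ^ (B.filter (fun x => x < i)).card := by
  unfold shuffleSign
  congr 1
  rw [Finset.card_filter]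
  refine Finset.sum_congr rfl fun x _ => ?_
  rw [Finset.filter_singleton]
  split <;> simp

lemma ofMatrix_singleton (h : Matrix (Fin n) (Fin n) ℝ) (i j : Fin n) :
    ofMatrix h {i} {j} = h i j := by
  unfold ofMatrix
  simp [Finset.singleton_inj, ite_and, Finset.sum_ite_eq]

lemma ofMatrix_eq_zero (h : Matrix (Fin n) (Fin n) ℝ) {A B : Finset (Fin n)}
    (hA : ∀ i, A ≠ {i}) : ofMatrix h A B = 0 := by
  unfold ofMatrix
  refine Finset.sum_eq_zero fun i _ => Finset.sum_eq_zero fun j _ => ?_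
  simp [hA i]

lemma ofMatrix_eq_zero' (h : Matrix (Fin n) (Fin n) ℝ) {A B : Finset (Fin n)}
    (hB : ∀ j, B ≠ {j}) : ofMatrix h A B = 0 := by
  unfold ofMatrix
  refine Finset.sum_eq_zero fun i _ => Finset.sum_eq_zero fun j _ => ?_
  simp [hB j]

lemma sum_powerset_singleton (I : Finset (Fin n)) (F : Finset (Fin n) → ℝ)
    (hF : ∀ A ∈ I.powerset, (∀ i, A ≠ {i}) → F A = 0) :
    ∑ A ∈ I.powerset, F A = ∑ i ∈ I, F {i} := by
  have himg : ∑ A ∈ I.image (fun i => ({i} : Finset (Fin n))), F A = ∑ i ∈ I, F {i} :=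
    Finset.sum_image (fun x _ y _ h => Finset.singleton_inj.mp h)
  rw [← himg]
  refine (Finset.sum_subset ?_ ?_).symm
  · intro A hA
    simp only [Finset.mem_image] at hA
    obtain ⟨i, hi, rfl⟩ := hA
    simpa [Finset.mem_powerset] using hi
  · intro A hA hA'
    refine hF A hA fun i hi => hA' ?_
    subst hi
    simp only [Finset.mem_image]
    exact ⟨i, by simpa [Finset.mem_powerset] using hA, rfl⟩

lemma wedge_ofMatrix (h : Matrix (Fin n) (Fin n) ℝ) (ω : DForm n) (I J : Finset (Fin n)) :
    wedge (ofMatrix h) ω I J =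
      ∑ i ∈ I, ∑ j ∈ J,
        shuffleSign {i} (I.erase i) * shuffleSign {j} (J.erase j) * h i j *
          ω (I.erase i) (J.erase j) := by
  unfold wedge
  rw [sum_powerset_singleton I _ ?_]
  · refine Finset.sum_congr rfl fun i hi => ?_
    rw [sum_powerset_singleton J _ ?_]
    · refine Finset.sum_congr rfl fun j hj => ?_
      rw [ofMatrix_singleton, Finset.sdiff_singleton_eq_erase, Finset.sdiff_singleton_eq_erase]
    · intro B _ hB
      rw [ofMatrix_eq_zero' h hB]
      ring
  · intro A hA hA'
    refine Finset.sum_eq_zero fun B _ => ?_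
    rw [ofMatrix_eq_zero h hA']
    ring

lemma image_orderEmbOfFin {k : ℕ} (I : Finset (Fin n)) (hI : I.card = k) :
    Finset.image (I.orderEmbOfFin hI) Finset.univ = I := by
  ext x
  simp only [Finset.mem_image, Finset.mem_univ, true_and]
  constructor
  · rintro ⟨p, rfl⟩; exact I.orderEmbOfFin_mem hI p
  · intro hx
    have := I.range_orderEmbOfFin hI
    have : x ∈ Set.range (I.orderEmbOfFin hI) := by rw [this]; exact hx
    exact this

lemma shuffleSign_singleton_orderEmb {k : ℕ} (I : Finset (Fin n)) (hI : I.card = k)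
    (p : Fin k) :
    shuffleSign {I.orderEmbOfFin hI p} (I.erase (I.orderEmbOfFin hI p)) = (-1 : ℝ) ^ (p : ℕ) := by
  set e := I.orderEmbOfFin hI with he
  rw [shuffleSign_singleton]
  congr 1
  have h1 : (I.erase (e p)).filter (fun x => x < e p) = I.filter (fun x => x < e p) := by
    ext x
    simp only [Finset.mem_filter, Finset.mem_erase]
    constructor
    · rintro ⟨⟨_, hx⟩, hlt⟩; exact ⟨hx, hlt⟩
    · rintro ⟨hx, hlt⟩; exact ⟨⟨ne_of_lt hlt, hx⟩, hlt⟩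
  have h2 : I.filter (fun x => x < e p) =
      Finset.image e (Finset.univ.filter (fun q => q < p)) := by
    ext x
    simp only [Finset.mem_filter, Finset.mem_image, Finset.mem_univ, true_and]
    constructor
    · rintro ⟨hx, hlt⟩
      have : x ∈ Set.range e := by rw [I.range_orderEmbOfFin hI]; exact hx
      obtain ⟨q, rfl⟩ := this
      exact ⟨q, (e.strictMono.lt_iff_lt).mp hlt, rfl⟩
    · rintro ⟨q, hq, rfl⟩
      exact ⟨I.orderEmbOfFin_mem hI q, e.strictMono hq⟩
  rw [h1, h2, Finset.card_image_of_injective _ e.injective]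
  have : Finset.univ.filter (fun q : Fin k => q < p) = Finset.Iio p := by
    ext q; simp
  rw [this, Fin.card_Iio]

lemma erase_orderEmbOfFin {k : ℕ} (I : Finset (Fin n)) (hI : I.card = k + 1) (p : Fin (k + 1)) :
    ∀ hc : (I.erase (I.orderEmbOfFin hI p)).card = k,
    ∀ a : Fin k, (I.erase (I.orderEmbOfFin hI p)).orderEmbOfFin hc a =
      I.orderEmbOfFin hI (p.succAbove a) := by
  intro hc a
  set e := I.orderEmbOfFin hI
  have key : (fun a : Fin k => e (p.succAbove a)) =
      (I.erase (e p)).orderEmbOfFin hc := by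
    refine Finset.orderEmbOfFin_unique hc ?_ ?_
    · intro x
      refine Finset.mem_erase.mpr ⟨?_, I.orderEmbOfFin_mem hI _⟩
      exact fun hx => p.succAbove_ne x (e.injective hx)
    · exact e.strictMono.comp (Fin.strictMono_succAbove p)
  exact (congrFun key a).symm

lemma card_erase_of_card {k : ℕ} {I : Finset (Fin n)} (hI : I.card = k + 1) {i : Fin n}
    (hi : i ∈ I) : (I.erase i).card = k := by
  rw [Finset.card_erase_of_mem hi, hI]
  omega

lemma laplace_sum (h : Matrix (Fin n) (Fin n) ℝ) (k : ℕ) (I J : Finset (Fin n))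
    (hI : I.card = k + 1) (hJ : J.card = k + 1) :
    ∑ i ∈ I, ∑ j ∈ J,
        shuffleSign {i} (I.erase i) * shuffleSign {j} (J.erase j) * h i j *
          dsub h k (I.erase i) (J.erase j) =
      ((k : ℝ) + 1) * dsub h (k + 1) I J := by
  set e := I.orderEmbOfFin hI with he
  set f := J.orderEmbOfFin hJ with hf
  set M : Matrix (Fin (k + 1)) (Fin (k + 1)) ℝ := Matrix.of fun a b => h (e a) (f b) with hM
  have hdI : dsub h (k + 1) I J = M.det := by
    rw [dsub, dif_pos ⟨hI, hJ⟩]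
  have hsub : ∀ (p b : Fin (k + 1)),
      dsub h k (I.erase (e p)) (J.erase (f b)) =
        (M.submatrix p.succAbove b.succAbove).det := by
    intro p b
    have hcI : (I.erase (e p)).card = k := card_erase_of_card hI (I.orderEmbOfFin_mem hI p)
    have hcJ : (J.erase (f b)).card = k := card_erase_of_card hJ (J.orderEmbOfFin_mem hJ b)
    rw [dsub, dif_pos ⟨hcI, hcJ⟩]
    congr 1
    funext a c
    simp only [Matrix.of_apply, Matrix.submatrix_apply]
    rw [erase_orderEmbOfFin I hI p hcI a, erase_orderEmbOfFin J hJ b hcJ c]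
    rfl
  conv_lhs => rw [← image_orderEmbOfFin I hI, ← image_orderEmbOfFin J hJ]
  rw [Finset.sum_image (fun x _ y _ hxy => e.injective hxy)]
  have : ∀ p : Fin (k + 1),
      (∑ j ∈ Finset.image f Finset.univ,
        shuffleSign {e p} ((Finset.image e Finset.univ).erase (e p)) *
          shuffleSign {j} ((Finset.image f Finset.univ).erase j) * h (e p) j *
          dsub h k ((Finset.image e Finset.univ).erase (e p))
            ((Finset.image f Finset.univ).erase j)) = M.det := by
    intro p
    rw [Finset.sum_image (fun x _ y _ hxy => f.injective hxy)]
    rw [Matrix.det_succ_row M p]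
    refine Finset.sum_congr rfl fun b _ => ?_
    rw [image_orderEmbOfFin I hI, image_orderEmbOfFin J hJ,
      shuffleSign_singleton_orderEmb I hI p, shuffleSign_singleton_orderEmb J hJ b,
      hsub p b]
    have : M p b = h (e p) (f b) := rfl
    rw [this, pow_add]
  rw [Finset.sum_congr rfl fun p _ => this p]
  rw [Finset.sum_const, Finset.card_univ, Fintype.card_fin, hdI]
  ring

lemma dpow_ofMatrix (h : Matrix (Fin n) (Fin n) ℝ) (k : ℕ) (I J : Finset (Fin n)) :
    dpow (ofMatrix h) k I J = (k.factorial : ℝ) * dsub h k I J := by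
  induction k generalizing I J with
  | zero =>
    by_cases hIJ : I = ∅ ∧ J = ∅
    · obtain ⟨rfl, rfl⟩ := hIJ
      rw [dpow_zero_apply, if_pos ⟨rfl, rfl⟩, dsub, dif_pos ⟨Finset.card_empty, Finset.card_empty⟩]
      simp [Matrix.det_fin_zero]
    · rw [dpow_zero_apply, if_neg hIJ, dsub, dif_neg, mul_zero]
      simp only [Finset.card_eq_zero]
      exact hIJ
  | succ k ih =>
    rw [dpow, wedge_ofMatrix]
    by_cases hc : I.card = k + 1 ∧ J.card = k + 1
    · obtain ⟨hI, hJ⟩ := hc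
      have : ∀ i ∈ I, ∀ j ∈ J,
          shuffleSign {i} (I.erase i) * shuffleSign {j} (J.erase j) * h i j *
            dpow (ofMatrix h) k (I.erase i) (J.erase j) =
          (k.factorial : ℝ) * (shuffleSign {i} (I.erase i) * shuffleSign {j} (J.erase j) *
            h i j * dsub h k (I.erase i) (J.erase j)) := by
        intro i _ j _
        rw [ih]; ring
      rw [Finset.sum_congr rfl fun i hi => Finset.sum_congr rfl fun j hj => this i hi j hj]
      simp_rw [← Finset.mul_sum]
      rw [laplace_sum h k I J hI hJ, Nat.factorial_succ]
      push_cast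
      ring
    · have hz : dsub h (k + 1) I J = 0 := by rw [dsub, dif_neg hc]
      rw [hz, mul_zero]
      refine Finset.sum_eq_zero fun i hi => Finset.sum_eq_zero fun j hj => ?_
      rw [ih]
      have hz2 : dsub h k (I.erase i) (J.erase j) = 0 := by
        rw [dsub, dif_neg]
        rintro ⟨h1, h2⟩
        apply hc
        have e1 := Finset.card_erase_of_mem hi
        have e2 := Finset.card_erase_of_mem hj
        have p1 : 0 < I.card := Finset.card_pos.mpr ⟨i, hi⟩
        have p2 : 0 < J.card := Finset.card_pos.mpr ⟨j, hj⟩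
        omega
      rw [hz2]; ring

lemma wedge_dpow_gMetric_zero (ω : DForm n) (I J : Finset (Fin n)) :
    wedge (dpow (gMetric n) 0) ω I J = ω I J := by
  unfold wedge
  rw [Finset.sum_eq_single_of_mem ∅ (Finset.empty_mem_powerset I)]
  · rw [Finset.sum_eq_single_of_mem ∅ (Finset.empty_mem_powerset J)]
    · rw [dpow_zero_apply, if_pos ⟨rfl, rfl⟩, shuffleSign_empty_left, shuffleSign_empty_left]
      simp
    · intro B _ hB
      rw [dpow_zero_apply, if_neg (by simp [hB])]
      ring
  · intro A _ hA
    refine Finset.sum_eq_zero fun B _ => ?_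
    rw [dpow_zero_apply, if_neg (by simp [hA])]
    ring

end DForm

namespace DForm

variable {m : ℕ}

lemma card_compl_singleton (i : Fin (m + 1)) : ({i}ᶜ : Finset (Fin (m + 1))).card = m := by
  rw [Finset.card_compl, Finset.card_singleton, Fintype.card_fin]
  omega

lemma compl_orderEmbOfFin (i : Fin (m + 1)) (a : Fin m) :
    ({i}ᶜ : Finset (Fin (m + 1))).orderEmbOfFin (card_compl_singleton i) a = i.succAbove a := by
  have key : (fun a : Fin m => i.succAbove a) =
      ({i}ᶜ : Finset (Fin (m + 1))).orderEmbOfFin (card_compl_singleton i) := by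
    refine Finset.orderEmbOfFin_unique _ ?_ (Fin.strictMono_succAbove i)
    intro x
    simp [Finset.mem_compl, (i.succAbove_ne x)]
  exact (congrFun key a).symm

lemma shuffleSign_compl_singleton (i : Fin (m + 1)) :
    shuffleSign ({i}ᶜ : Finset (Fin (m + 1))) {i} = (-1 : ℝ) ^ (m - (i : ℕ)) := by
  unfold shuffleSign
  congr 1
  rw [Finset.sum_singleton]
  have : ({i}ᶜ : Finset (Fin (m + 1))).filter (fun a => i < a) = Finset.Ioi i := by
    ext a
    simp only [Finset.mem_filter, Finset.mem_compl, Finset.mem_singleton, Finset.mem_Ioi]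
    constructor
    · rintro ⟨_, h⟩; exact h
    · intro h; exact ⟨(ne_of_lt h).symm, h⟩
  rw [this, Fin.card_Ioi]
  omega

lemma dsub_compl (h : Matrix (Fin (m + 1)) (Fin (m + 1)) ℝ) (i j : Fin (m + 1)) :
    dsub h m ({i}ᶜ : Finset (Fin (m + 1))) {j}ᶜ =
      (h.submatrix (Fin.succAbove i) (Fin.succAbove j)).det := by
  rw [dsub, dif_pos ⟨card_compl_singleton i, card_compl_singleton j⟩]
  congr 1
  funext a b
  simp only [Matrix.of_apply, Matrix.submatrix_apply]
  rw [compl_orderEmbOfFin i a, compl_orderEmbOfFin j b]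

end DForm

open DForm in
/-- `t_{n-1}(h) = (1/(n-1)!) * (h^{n-1})` has matrix entries the cofactors of the matrix of
`h`; i.e. its matrix is the cofactor matrix, the transpose of the adjugate. Here `n = m+1`. -/
theorem statement3 (m : ℕ) (h : Matrix (Fin (m + 1)) (Fin (m + 1)) ℝ) :
    (∀ i j : Fin (m + 1),
      tInv h m {i} {j} =
        (-1 : ℝ) ^ ((i : ℕ) + (j : ℕ)) *
          (h.submatrix (Fin.succAbove i) (Fin.succAbove j)).det) ∧
    Matrix.of (fun i j : Fin (m + 1) => tInv h m {i} {j}) = (Matrix.adjugate h).transpose := by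
  have hfac : (m.factorial : ℝ) ≠ 0 := Nat.cast_ne_zero.mpr m.factorial_ne_zero
  have key : ∀ i j : Fin (m + 1),
      tInv h m {i} {j} =
        (-1 : ℝ) ^ ((i : ℕ) + (j : ℕ)) *
          (h.submatrix (Fin.succAbove i) (Fin.succAbove j)).det := by
    intro i j
    have h0 : m + 1 - 1 - m = 0 := by omega
    rw [tInv, h0]
    simp only [Nat.factorial_zero, mul_one, Pi.smul_apply, smul_eq_mul]
    rw [hstar, wedge_dpow_gMetric_zero, dpow_ofMatrix, dsub_compl,
      shuffleSign_compl_singleton, shuffleSign_compl_singleton]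
    have hi : (i : ℕ) ≤ m := Fin.is_le i
    have hj : (j : ℕ) ≤ m := Fin.is_le j
    have hsum : (m - (i : ℕ)) + (m - (j : ℕ)) + ((i : ℕ) + (j : ℕ)) = 2 * m := by omega
    have hprod : (-1 : ℝ) ^ (m - (i : ℕ)) * (-1) ^ (m - (j : ℕ)) *
        (-1) ^ ((i : ℕ) + (j : ℕ)) = 1 := by
      rw [← pow_add, ← pow_add, hsum, pow_mul]
      norm_num
    have hc : (-1 : ℝ) ^ ((i : ℕ) + (j : ℕ)) * (-1) ^ ((i : ℕ) + (j : ℕ)) = 1 := by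
      rw [← pow_add]
      exact Even.neg_one_pow ⟨(i : ℕ) + (j : ℕ), by ring⟩
    have hsign : (-1 : ℝ) ^ (m - (i : ℕ)) * (-1) ^ (m - (j : ℕ)) =
        (-1) ^ ((i : ℕ) + (j : ℕ)) := by
      calc (-1 : ℝ) ^ (m - (i : ℕ)) * (-1) ^ (m - (j : ℕ))
          = (-1 : ℝ) ^ (m - (i : ℕ)) * (-1) ^ (m - (j : ℕ)) *
            ((-1) ^ ((i : ℕ) + (j : ℕ)) * (-1) ^ ((i : ℕ) + (j : ℕ))) := by rw [hc, mul_one]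
        _ = ((-1 : ℝ) ^ (m - (i : ℕ)) * (-1) ^ (m - (j : ℕ)) *
            (-1) ^ ((i : ℕ) + (j : ℕ))) * (-1) ^ ((i : ℕ) + (j : ℕ)) := by ring
        _ = (-1) ^ ((i : ℕ) + (j : ℕ)) := by rw [hprod, one_mul]
    field_simp
    rw [← hsign]
    ring
  refine ⟨key, ?_⟩
  ext i j
  rw [Matrix.of_apply, key i j, Matrix.transpose_apply,
    Matrix.adjugate_fin_succ_eq_det_submatrix]
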